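/- Curvature transport under flow: let A be a differential graded Lie algebra over a field k of characteristic zero, let a ∈ A_{−1} be arbitrary, and let e ∈ A_0 have nilpotent adjoint action ad_e. Then κ(u_e(a)) = exp(−ad_e)(κ(a)), where κ(x) := ∂x + (1/2)[x,x] is the curvature. -/

import Mathlib

/-- A differential graded Lie algebra (DGLA) over a field `k` of characteristic zero:
a `ℤ`-graded `k`-vector space `A = ⊕ₙ Aₙ` with a bilinear bracket respecting the grading,
graded antisymmetry, the graded Jacobi identity, and a differential `∂` of degree `-1`
with `∂ ∘ ∂ = 0` satisfying the graded Leibniz rule. -/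
class DGLA (k : Type*) (A : Type*) [Field k] [CharZero k]
    [AddCommGroup A] [Module k A] where
  bracket : A →ₗ[k] A →ₗ[k] A
  grading : ℤ → Submodule k A
  isInternal : DirectSum.IsInternal grading
  bracket_mem : ∀ (m n : ℤ) (a b : A), a ∈ grading m → b ∈ grading n →
    bracket a b ∈ grading (m + n)
  bracket_antisymm : ∀ (m n : ℤ) (a b : A), a ∈ grading m → b ∈ grading n →
    bracket b a = -(((-1 : k) ^ (m * n)) • bracket a b)
  jacobi : ∀ (l m n : ℤ) (a b c : A), a ∈ grading l → b ∈ grading m → c ∈ grading n →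
    ((-1 : k) ^ (l * m)) • bracket (bracket b c) a
      + ((-1 : k) ^ (m * n)) • bracket (bracket c a) b
      + ((-1 : k) ^ (n * l)) • bracket (bracket a b) c = 0
  d : A →ₗ[k] A
  d_mem : ∀ (n : ℤ) (a : A), a ∈ grading n → d a ∈ grading (n - 1)
  d_sq : ∀ a : A, d (d a) = 0
  leibniz : ∀ (m : ℤ) (a b : A), a ∈ grading m →
    d (bracket a b) = bracket (d a) b + ((-1 : k) ^ m) • bracket a (d b)

namespace DGLA

variable (k : Type*) {A : Type*} [Field k] [CharZero k] [AddCommGroup A] [Module k A]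
  [DGLA k A]

/-- The differential `∂` of the DGLA. -/
noncomputable def D : A →ₗ[k] A := DGLA.d (k := k) (A := A)

/-- The bracket `[x, y]` of the DGLA. -/
noncomputable def br (x y : A) : A := DGLA.bracket (k := k) (A := A) x y

/-- The `n`-th graded piece `Aₙ`. -/
noncomputable def gr (n : ℤ) : Submodule k A := DGLA.grading (k := k) (A := A) n

/-- The adjoint operator `ad_x = [x, ·]`. -/
noncomputable def ad (x : A) : Module.End k A := DGLA.bracket (k := k) (A := A) x

/-- A *point*: an element of `A₋₁` satisfying the Maurer–Cartan equation
`∂a + (1/2)[a,a] = 0`. -/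
def IsPoint (a : A) : Prop :=
  a ∈ gr k (-1) ∧ D k a + (2⁻¹ : k) • br k a a = 0

/-- The twisted differential `∂_a = ∂ + ad_a`. -/
noncomputable def twistD (a : A) : Module.End k A := D k + ad k a

/-- The curvature `κ(a) = ∂a + (1/2)[a,a]`. -/
noncomputable def curv (a : A) : A := D k a + (2⁻¹ : k) • br k a a

/-- The truncated operator power series `Σ_{n<N} (−1)ⁿ fⁿ/n!`; when `f^N = 0` this is the
exponential `exp(−f)` (a finite sum by nilpotency). -/
noncomputable def expNeg (f : Module.End k A) (N : ℕ) : Module.End k A :=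
  ∑ n ∈ Finset.range N, ((-1 : k) ^ n * (Nat.factorial n : k)⁻¹) • f ^ n

/-- The truncated operator power series `F(f) = Σ_{n<N} (−1)ⁿ fⁿ/(n+1)!`; when `f^N = 0`
this is the power series of `(1 − e^{−T})/T` evaluated at `f` (a finite sum by nilpotency). -/
noncomputable def Fser (f : Module.End k A) (N : ℕ) : Module.End k A :=
  ∑ n ∈ Finset.range N, ((-1 : k) ^ n * (Nat.factorial (n + 1) : k)⁻¹) • f ^ n

/-- The time-one flow `u_e(a) := exp(−ad_e)(a) + F(ad_e)(∂e)` of `e ∈ A₀` applied to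
`a ∈ A₋₁`, truncated at order `N` (exact when `(ad_e)^N = 0`). -/
noncomputable def flow (e : A) (N : ℕ) (a : A) : A :=
  expNeg k (ad k e) N a + Fser k (ad k e) N (D k e)

end DGLA


section AuxCurvFlow

open DGLA Finset

variable {k A : Type*} [Field k] [CharZero k] [AddCommGroup A] [Module k A] [DGLA k A]

lemma br_zero_left' (y : A) : br k (0 : A) y = 0 := by simp [br]

lemma br_zero_right' (x : A) : br k x (0 : A) = 0 := by simp [br]

lemma br_symm' {x y : A} (hx : x ∈ gr k (-1)) (hy : y ∈ gr k (-1)) :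
    br k x y = br k y x := by
  have h := DGLA.bracket_antisymm (k := k) (-1) (-1) x y hx hy
  have h1 : ((-1 : k) ^ ((-1 : ℤ) * (-1))) = -1 := by norm_num
  rw [h1] at h
  simp only [neg_smul, one_smul, neg_neg] at h
  exact h.symm

lemma ad_mem' {e x : A} (he : e ∈ gr k 0) (hx : x ∈ gr k (-1)) :
    ad k e x ∈ gr k (-1) := by
  have := DGLA.bracket_mem (k := k) 0 (-1) e x he hx
  norm_num at this
  exact this

lemma De_mem' {e : A} (he : e ∈ gr k 0) : D k e ∈ gr k (-1) := by
  have := DGLA.d_mem (k := k) 0 e he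
  norm_num at this
  exact this

lemma ad_der' {e x y : A} (he : e ∈ gr k 0) (hx : x ∈ gr k (-1)) (hy : y ∈ gr k (-1)) :
    ad k e (br k x y) = br k (ad k e x) y + br k x (ad k e y) := by
  have hj := DGLA.jacobi (k := k) (-1) (-1) 0 x y e hx hy he
  have e1 : DGLA.bracket (k := k) y e = -(DGLA.bracket (k := k) e y) := by
    have h := DGLA.bracket_antisymm (k := k) 0 (-1) e y he hy
    simpa using h
  have hxy2 : DGLA.bracket (k := k) x y ∈ DGLA.grading (k := k) (-2) := by
    have := DGLA.bracket_mem (k := k) (-1) (-1) x y hx hy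
    norm_num at this
    exact this
  have e2 : DGLA.bracket (k := k) (DGLA.bracket (k := k) x y) e
      = -(DGLA.bracket (k := k) e (DGLA.bracket (k := k) x y)) := by
    have h := DGLA.bracket_antisymm (k := k) 0 (-2) e (DGLA.bracket (k := k) x y) he hxy2
    simpa using h
  have hey : DGLA.bracket (k := k) e y ∈ gr k (-1) := ad_mem' he hy
  have e3 : DGLA.bracket (k := k) (DGLA.bracket (k := k) e y) x
      = DGLA.bracket (k := k) x (DGLA.bracket (k := k) e y) :=
    br_symm' hey hx
  have hz1 : ((-1 : k) ^ ((-1 : ℤ) * (-1))) = -1 := by norm_num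
  have hz2 : ((-1 : k) ^ ((-1 : ℤ) * 0)) = 1 := by norm_num
  have hz3 : ((-1 : k) ^ ((0 : ℤ) * (-1))) = 1 := by norm_num
  rw [hz1, hz2, hz3, e1, e2, one_smul, one_smul, map_neg, LinearMap.neg_apply] at hj
  rw [e3] at hj
  show DGLA.bracket (k := k) e (DGLA.bracket (k := k) x y)
      = DGLA.bracket (k := k) (DGLA.bracket (k := k) e x) y
        + DGLA.bracket (k := k) x (DGLA.bracket (k := k) e y)
  have hj' : DGLA.bracket (k := k) x (DGLA.bracket (k := k) e y)
      + DGLA.bracket (k := k) (DGLA.bracket (k := k) e x) y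
      - DGLA.bracket (k := k) e (DGLA.bracket (k := k) x y) = 0 := by
    rw [sub_eq_add_neg]
    calc DGLA.bracket (k := k) x (DGLA.bracket (k := k) e y)
        + DGLA.bracket (k := k) (DGLA.bracket (k := k) e x) y
        + -(DGLA.bracket (k := k) e (DGLA.bracket (k := k) x y))
        = (-1 : k) • -(DGLA.bracket (k := k) x (DGLA.bracket (k := k) e y))
          + DGLA.bracket (k := k) (DGLA.bracket (k := k) e x) y
          + -(DGLA.bracket (k := k) e (DGLA.bracket (k := k) x y)) := by
          rw [neg_smul, one_smul, neg_neg]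
      _ = 0 := hj
  have := sub_eq_zero.mp hj'
  rw [← this]
  abel

lemma D_ad_comm' {e : A} (he : e ∈ gr k 0) (x : A) :
    D k (ad k e x) = br k (D k e) x + ad k e (D k x) := by
  have h := DGLA.leibniz (k := k) 0 e x he
  have hz : ((-1 : k) ^ (0 : ℤ)) = 1 := by norm_num
  rw [hz, one_smul] at h
  exact h

/-- The coefficients of the time-`t` flow `u(t) = exp(-t ad_e) a + F(t ad_e)(t ∂e)`. -/
noncomputable def uuCF (k : Type*) {A : Type*} [Field k] [CharZero k] [AddCommGroup A]
    [Module k A] [DGLA k A] (e a : A) : ℕ → A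
  | 0 => a
  | n + 1 => ((n : k) + 1)⁻¹ •
      (-(DGLA.ad k e (uuCF k e a n)) + if n = 0 then DGLA.D k e else 0)

lemma uuCF_zero (e a : A) : uuCF k e a 0 = a := rfl

lemma uuCF_succ (e a : A) (n : ℕ) :
    uuCF k e a (n + 1) = ((n : k) + 1)⁻¹ •
      (-(DGLA.ad k e (uuCF k e a n)) + if n = 0 then DGLA.D k e else 0) := rfl

lemma uuCF_rec (e a : A) (n : ℕ) :
    ((n : k) + 1) • uuCF k e a (n + 1)
      = -(ad k e (uuCF k e a n)) + (if n = 0 then D k e else 0) := by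
  rw [uuCF_succ, smul_inv_smul₀ (Nat.cast_add_one_ne_zero n)]

lemma uuCF_form (e a : A) (n : ℕ) :
    uuCF k e a (n + 1)
      = ((-1 : k) ^ (n + 1) * (Nat.factorial (n + 1) : k)⁻¹) • (ad k e ^ (n + 1)) a
        + ((-1 : k) ^ n * (Nat.factorial (n + 1) : k)⁻¹) • (ad k e ^ n) (D k e) := by
  induction n with
  | zero =>
      rw [uuCF_succ]
      simp [uuCF_zero, pow_one, Nat.factorial]
  | succ m ih =>
      have hne : ((m : k) + 1 + 1) ≠ 0 := by
        have := Nat.cast_add_one_ne_zero (R := k) (m + 1)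
        push_cast at this
        exact this
      rw [uuCF_succ, if_neg (Nat.succ_ne_zero m), add_zero, ih]
      push_cast
      rw [map_add, map_smul, map_smul]
      have h1 : DGLA.ad k e ((ad k e ^ (m + 1)) a) = (ad k e ^ (m + 2)) a := by
        conv_rhs => rw [show m + 2 = m + 1 + 1 from rfl, pow_succ' (ad k e) (m + 1)]
        rfl
      have h2 : DGLA.ad k e ((ad k e ^ m) (D k e)) = (ad k e ^ (m + 1)) (D k e) := by
        conv_rhs => rw [pow_succ' (ad k e) m]
        rfl
      rw [h1, h2, neg_add, ← neg_smul, ← neg_smul, smul_add, smul_smul, smul_smul]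
      congr 1
      · congr 1
        have hfac : (Nat.factorial (m + 2) : k) = ((m : k) + 1 + 1) * (Nat.factorial (m + 1) : k) := by
          rw [Nat.factorial_succ]
          push_cast
          ring
        have hf1 : (Nat.factorial (m + 1) : k) ≠ 0 := by
          exact_mod_cast Nat.cast_ne_zero.mpr (Nat.factorial_ne_zero (m + 1))
        rw [hfac]
        field_simp
        ring
      · congr 1
        have hfac : (Nat.factorial (m + 2) : k) = ((m : k) + 1 + 1) * (Nat.factorial (m + 1) : k) := by
          rw [Nat.factorial_succ]
          push_cast
          ring
        have hf1 : (Nat.factorial (m + 1) : k) ≠ 0 := by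
          exact_mod_cast Nat.cast_ne_zero.mpr (Nat.factorial_ne_zero (m + 1))
        rw [hfac]
        field_simp
        ring

lemma uuCF_mem {e a : A} (he : e ∈ gr k 0) (ha : a ∈ gr k (-1)) (n : ℕ) :
    uuCF k e a n ∈ gr k (-1) := by
  induction n with
  | zero => exact ha
  | succ m ih =>
      rw [uuCF_succ]
      refine Submodule.smul_mem _ _ (Submodule.add_mem _ (Submodule.neg_mem _ ?_) ?_)
      · exact ad_mem' he ih
      · split_ifs
        · exact De_mem' he
        · exact Submodule.zero_mem _

lemma uuCF_eq_zero {e a : A} {N : ℕ} (hN : ad k e ^ N = 0) (m : ℕ) (hm : N + 1 ≤ m) :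
    uuCF k e a m = 0 := by
  obtain ⟨n, rfl⟩ : ∃ n, m = n + 1 := ⟨m - 1, by omega⟩
  rw [uuCF_form]
  have h1 : (ad k e ^ (n + 1)) = 0 := pow_eq_zero_of_le (by omega) hN
  have h2 : (ad k e ^ n) = 0 := pow_eq_zero_of_le (by omega) hN
  simp [h1, h2]

/-- The coefficients of `κ(u(t))` as a polynomial in `t`. -/
noncomputable def ccCF (k : Type*) {A : Type*} [Field k] [CharZero k] [AddCommGroup A]
    [Module k A] [DGLA k A] (e a : A) (n : ℕ) : A :=
  D k (uuCF k e a n)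
    + (2⁻¹ : k) • ∑ i ∈ Finset.range (n + 1), br k (uuCF k e a i) (uuCF k e a (n - i))

lemma ccCF_zero (e a : A) : ccCF k e a 0 = curv k a := by
  simp [ccCF, curv, uuCF_zero]

lemma reflect_sum' (f : ℕ → ℕ → A) (n : ℕ) :
    ∑ i ∈ range (n + 1), f i (n - i) = ∑ i ∈ range (n + 1), f (n - i) i := by
  rw [← Finset.sum_range_reflect (fun i => f i (n - i)) (n + 1)]
  refine Finset.sum_congr rfl fun j hj => ?_
  have hj' : j ≤ n := by simpa [Nat.lt_succ_iff] using Finset.mem_range.mp hj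
  rw [show n + 1 - 1 - j = n - j from by omega, Nat.sub_sub_self hj']

lemma ccCF_rec {e a : A} (he : e ∈ gr k 0) (ha : a ∈ gr k (-1)) (n : ℕ) :
    ((n : k) + 1) • ccCF k e a (n + 1) = -(ad k e (ccCF k e a n)) := by
  have hu : ∀ m, uuCF k e a m ∈ gr k (-1) := uuCF_mem he ha
  have part1 : ((n : k) + 1) • D k (uuCF k e a (n + 1))
      = -(br k (D k e) (uuCF k e a n)) - ad k e (D k (uuCF k e a n)) := by
    rw [← map_smul, uuCF_rec, map_add, map_neg]
    have hite : D k (if n = 0 then D k e else 0) = 0 := by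
      split_ifs
      · exact DGLA.d_sq e
      · exact map_zero _
    rw [hite, add_zero, D_ad_comm' he]
    abel
  have hA2 : ∑ i ∈ range (n + 1 + 1),
        ((n + 1 - i : ℕ) : k) • br k (uuCF k e a i) (uuCF k e a (n + 1 - i))
      = ∑ i ∈ range (n + 1 + 1), (i : k) • br k (uuCF k e a i) (uuCF k e a (n + 1 - i)) := by
    rw [← Finset.sum_range_reflect
      (fun i => ((n + 1 - i : ℕ) : k) • br k (uuCF k e a i) (uuCF k e a (n + 1 - i))) (n + 1 + 1)]
    refine Finset.sum_congr rfl fun j hj => ?_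
    have hj' : j ≤ n + 1 := by simpa [Nat.lt_succ_iff] using Finset.mem_range.mp hj
    rw [show n + 1 + 1 - 1 - j = n + 1 - j from by omega, Nat.sub_sub_self hj',
      br_symm' (hu _) (hu _)]
  have hA1 : ∑ i ∈ range (n + 1 + 1), (i : k) • br k (uuCF k e a i) (uuCF k e a (n + 1 - i))
      = br k (D k e) (uuCF k e a n)
        - ∑ i ∈ range (n + 1), br k (ad k e (uuCF k e a i)) (uuCF k e a (n - i)) := by
    rw [Finset.sum_range_succ']
    rw [Nat.cast_zero, zero_smul, add_zero]
    have hterm : ∀ i ∈ range (n + 1),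
        ((i + 1 : ℕ) : k) • br k (uuCF k e a (i + 1)) (uuCF k e a (n + 1 - (i + 1)))
        = -(br k (ad k e (uuCF k e a i)) (uuCF k e a (n - i)))
          + (if i = 0 then br k (D k e) (uuCF k e a (n - i)) else 0) := by
      intro i _
      have hidx : n + 1 - (i + 1) = n - i := by omega
      rw [hidx]
      have hpull : ((i + 1 : ℕ) : k) • br k (uuCF k e a (i + 1)) (uuCF k e a (n - i))
          = br k (((i : k) + 1) • uuCF k e a (i + 1)) (uuCF k e a (n - i)) := by
        simp only [br, map_smul, LinearMap.smul_apply]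
        push_cast
        ring_nf
      rw [hpull, uuCF_rec]
      simp only [br, map_add, map_neg, LinearMap.add_apply, LinearMap.neg_apply]
      congr 1
      split_ifs
      · rfl
      · simp
    rw [Finset.sum_congr rfl hterm, Finset.sum_add_distrib, Finset.sum_neg_distrib,
      Finset.sum_ite_eq' (range (n + 1)) 0
        (fun i => br k (D k e) (uuCF k e a (n - i)))]
    rw [if_pos (Finset.mem_range.mpr (Nat.succ_pos n)), Nat.sub_zero]
    abel
  have part2 : ((n : k) + 1) • ((2⁻¹ : k) •
        ∑ i ∈ range (n + 1 + 1), br k (uuCF k e a i) (uuCF k e a (n + 1 - i)))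
      = br k (D k e) (uuCF k e a n)
        - ∑ i ∈ range (n + 1), br k (ad k e (uuCF k e a i)) (uuCF k e a (n - i)) := by
    rw [smul_comm, Finset.smul_sum]
    have hsplit : ∀ i ∈ range (n + 1 + 1),
        ((n : k) + 1) • br k (uuCF k e a i) (uuCF k e a (n + 1 - i))
        = (i : k) • br k (uuCF k e a i) (uuCF k e a (n + 1 - i))
          + ((n + 1 - i : ℕ) : k) • br k (uuCF k e a i) (uuCF k e a (n + 1 - i)) := by
      intro i hi
      rw [← add_smul]
      congr 1
      have hii : i + (n + 1 - i) = n + 1 := by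
        have : i ≤ n + 1 := by simpa [Nat.lt_succ_iff] using Finset.mem_range.mp hi
        omega
      have := congrArg (fun m : ℕ => (m : k)) hii
      push_cast at this
      exact this.symm
    rw [Finset.sum_congr rfl hsplit, Finset.sum_add_distrib, hA2, ← two_smul k, smul_smul]
    norm_num
    exact hA1
  have hTS : ad k e (∑ i ∈ range (n + 1), br k (uuCF k e a i) (uuCF k e a (n - i)))
      = (2 : k) • ∑ i ∈ range (n + 1), br k (ad k e (uuCF k e a i)) (uuCF k e a (n - i)) := by
    rw [map_sum]
    have hterm : ∀ i ∈ range (n + 1),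
        ad k e (br k (uuCF k e a i) (uuCF k e a (n - i)))
        = br k (ad k e (uuCF k e a i)) (uuCF k e a (n - i))
          + br k (uuCF k e a i) (ad k e (uuCF k e a (n - i))) :=
      fun i _ => ad_der' he (hu _) (hu _)
    rw [Finset.sum_congr rfl hterm, Finset.sum_add_distrib]
    have hBB : ∑ i ∈ range (n + 1), br k (uuCF k e a i) (ad k e (uuCF k e a (n - i)))
        = ∑ i ∈ range (n + 1), br k (ad k e (uuCF k e a i)) (uuCF k e a (n - i)) := by
      rw [reflect_sum' (fun i j => br k (uuCF k e a i) (ad k e (uuCF k e a j))) n]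
      exact Finset.sum_congr rfl fun j _ => br_symm' (hu _) (ad_mem' he (hu _))
    rw [hBB, two_smul]
  show ((n : k) + 1) • (D k (uuCF k e a (n + 1))
      + (2⁻¹ : k) • ∑ i ∈ range (n + 1 + 1), br k (uuCF k e a i) (uuCF k e a (n + 1 - i)))
    = -(ad k e (D k (uuCF k e a n)
      + (2⁻¹ : k) • ∑ i ∈ range (n + 1), br k (uuCF k e a i) (uuCF k e a (n - i))))
  rw [smul_add, part1, part2, map_add, map_smul, hTS, smul_smul]
  norm_num
  abel


lemma ccCF_form {e a : A} (he : e ∈ gr k 0) (ha : a ∈ gr k (-1)) (n : ℕ) :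
    ccCF k e a n = ((-1 : k) ^ n * (Nat.factorial n : k)⁻¹) • (ad k e ^ n) (curv k a) := by
  induction n with
  | zero => simp [ccCF_zero, Nat.factorial]
  | succ m ih =>
      have hne : ((m : k) + 1) ≠ 0 := Nat.cast_add_one_ne_zero m
      have hstep : ccCF k e a (m + 1) = ((m : k) + 1)⁻¹ • (-(ad k e (ccCF k e a m))) := by
        rw [← ccCF_rec he ha m, inv_smul_smul₀ hne]
      rw [hstep, ih, map_smul]
      have hpow : ad k e ((ad k e ^ m) (curv k a)) = (ad k e ^ (m + 1)) (curv k a) := by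
        conv_rhs => rw [pow_succ' (ad k e) m]
        rfl
      rw [hpow]
      simp only [smul_neg, smul_smul]
      rw [← neg_smul]
      congr 1
      have hfac : (Nat.factorial (m + 1) : k) = ((m : k) + 1) * (Nat.factorial m : k) := by
        rw [Nat.factorial_succ]
        push_cast
        ring
      have hf1 : (Nat.factorial m : k) ≠ 0 :=
        Nat.cast_ne_zero.mpr (Nat.factorial_ne_zero m)
      rw [hfac]
      field_simp
      ring

lemma flow_eq_sum {e a : A} {N : ℕ} (hN : ad k e ^ N = 0) :
    flow k e N a = ∑ n ∈ range (N + 1), uuCF k e a n := by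
  have hEapp : expNeg k (ad k e) N a
      = ∑ n ∈ range N, ((-1 : k) ^ n * (Nat.factorial n : k)⁻¹) • (ad k e ^ n) a := by
    simp [expNeg, LinearMap.sum_apply, LinearMap.smul_apply]
  have hFapp : Fser k (ad k e) N (D k e)
      = ∑ n ∈ range N, ((-1 : k) ^ n * (Nat.factorial (n + 1) : k)⁻¹) • (ad k e ^ n) (D k e) := by
    simp [Fser, LinearMap.sum_apply, LinearMap.smul_apply]
  have htop : ((-1 : k) ^ N * (Nat.factorial N : k)⁻¹) • (ad k e ^ N) a = 0 := by
    rw [hN]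
    simp
  have hE2 : expNeg k (ad k e) N a
      = a + ∑ i ∈ range N,
          ((-1 : k) ^ (i + 1) * (Nat.factorial (i + 1) : k)⁻¹) • (ad k e ^ (i + 1)) a := by
    rw [hEapp, ← add_zero (∑ n ∈ range N, _), ← htop, ← Finset.sum_range_succ,
      Finset.sum_range_succ']
    simp [Nat.factorial]
    abel
  rw [Finset.sum_range_succ']
  have hform : ∑ i ∈ range N, uuCF k e a (i + 1)
      = ∑ i ∈ range N,
          (((-1 : k) ^ (i + 1) * (Nat.factorial (i + 1) : k)⁻¹) • (ad k e ^ (i + 1)) a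
            + ((-1 : k) ^ i * (Nat.factorial (i + 1) : k)⁻¹) • (ad k e ^ i) (D k e)) :=
    Finset.sum_congr rfl fun i _ => uuCF_form e a i
  rw [hform, Finset.sum_add_distrib, uuCF_zero]
  show flow k e N a = _
  rw [flow, hE2, hFapp]
  abel

lemma square_to_triangle (f : ℕ → ℕ → A) (M : ℕ) (hf : ∀ i j, M ≤ i ∨ M ≤ j → f i j = 0) :
    ∑ i ∈ range M, ∑ j ∈ range M, f i j
      = ∑ n ∈ range (2 * M), ∑ i ∈ range (n + 1), f i (n - i) := by
  calc ∑ i ∈ range M, ∑ j ∈ range M, f i j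
      = ∑ p ∈ range M ×ˢ range M, f p.1 p.2 := by
        rw [Finset.sum_product]
    _ = ∑ p ∈ (range (2 * M)).biUnion Finset.HasAntidiagonal.antidiagonal, f p.1 p.2 := by
        apply Finset.sum_subset
        · intro p hp
          simp only [Finset.mem_product, Finset.mem_range] at hp
          simp only [Finset.mem_biUnion, Finset.mem_range]
          exact ⟨p.1 + p.2, by omega, Finset.HasAntidiagonal.mem_antidiagonal.mpr rfl⟩
        · intro p _ hnp
          simp only [Finset.mem_product, Finset.mem_range, not_and_or, not_lt] at hnp
          exact hf p.1 p.2 hnp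
    _ = ∑ n ∈ range (2 * M), ∑ p ∈ Finset.HasAntidiagonal.antidiagonal n, f p.1 p.2 := by
        apply Finset.sum_biUnion
        intro x _ y _ hxy
        simp only [Function.onFun]
        rw [Finset.disjoint_left]
        intro p hpx hpy
        rw [Finset.HasAntidiagonal.mem_antidiagonal] at hpx hpy
        exact hxy (hpx ▸ hpy.symm ▸ rfl)
    _ = ∑ n ∈ range (2 * M), ∑ i ∈ range (n + 1), f i (n - i) :=
        Finset.sum_congr rfl fun n _ =>
          Finset.Nat.sum_antidiagonal_eq_sum_range_succ f n

end AuxCurvFlow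


open DGLA in
/-- curvature transport under flow. In a DGLA over a field `k` of characteristic
zero, for arbitrary `a ∈ A₋₁` and `e ∈ A₀` with nilpotent adjoint action (`(ad_e)^N = 0`),
the curvature `κ(x) = ∂x + (1/2)[x,x]` satisfies `κ(u_e(a)) = exp(−ad_e)(κ(a))`. -/
theorem curv_flow_eq_expNeg_curv {k A : Type*} [Field k] [CharZero k]
    [AddCommGroup A] [Module k A] [DGLA k A]
    (a e : A) (ha : a ∈ gr k (-1)) (he : e ∈ gr k 0)
    (N : ℕ) (hN : ad k e ^ N = 0) :
    curv k (flow k e N a) = expNeg k (ad k e) N (curv k a) := by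
  classical
  rw [flow_eq_sum hN]
  have hu0 : ∀ m, N + 1 ≤ m → uuCF k e a m = 0 := fun m hm => uuCF_eq_zero hN m hm
  have hzero : ∀ i j, N + 1 ≤ i ∨ N + 1 ≤ j →
      br k (uuCF k e a i) (uuCF k e a j) = 0 := by
    intro i j hij
    rcases hij with h | h
    · rw [hu0 i h, br_zero_left']
    · rw [hu0 j h, br_zero_right']
  have hbr : br k (∑ n ∈ Finset.range (N + 1), uuCF k e a n)
        (∑ n ∈ Finset.range (N + 1), uuCF k e a n)
      = ∑ i ∈ Finset.range (N + 1), ∑ j ∈ Finset.range (N + 1),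
          br k (uuCF k e a i) (uuCF k e a j) := by
    simp only [br, map_sum, LinearMap.coe_sum, Finset.sum_apply]
    exact Finset.sum_comm
  simp only [curv]
  rw [map_sum, hbr, square_to_triangle _ (N + 1) hzero]
  have hDext : ∑ n ∈ Finset.range (N + 1), D k (uuCF k e a n)
      = ∑ n ∈ Finset.range (2 * (N + 1)), D k (uuCF k e a n) := by
    apply Finset.sum_subset (Finset.range_subset_range.mpr (by omega))
    intro x _ hx
    rw [hu0 x (by simpa [Nat.lt_succ_iff, not_lt] using hx), map_zero]
  rw [hDext, Finset.smul_sum, ← Finset.sum_add_distrib]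
  have hcc : ∑ n ∈ Finset.range (2 * (N + 1)),
        (D k (uuCF k e a n)
          + (2⁻¹ : k) • ∑ i ∈ Finset.range (n + 1), br k (uuCF k e a i) (uuCF k e a (n - i)))
      = ∑ n ∈ Finset.range (2 * (N + 1)),
          ((-1 : k) ^ n * (Nat.factorial n : k)⁻¹) • (ad k e ^ n) (curv k a) :=
    Finset.sum_congr rfl fun n _ => by
      rw [show D k (uuCF k e a n)
          + (2⁻¹ : k) • ∑ i ∈ Finset.range (n + 1), br k (uuCF k e a i) (uuCF k e a (n - i))
          = ccCF k e a n from rfl, ccCF_form he ha]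
  rw [hcc]
  show _ = expNeg k (ad k e) N (curv k a)
  have hR : expNeg k (ad k e) N (curv k a)
      = ∑ n ∈ Finset.range N,
          ((-1 : k) ^ n * (Nat.factorial n : k)⁻¹) • (ad k e ^ n) (curv k a) := by
    simp [expNeg, LinearMap.sum_apply, LinearMap.smul_apply]
  rw [hR]
  refine (Finset.sum_subset (Finset.range_subset_range.mpr (by omega)) ?_).symm
  intro n _ hn
  have hle : N ≤ n := by simpa [not_lt] using hn
  rw [pow_eq_zero_of_le hle hN]
  simp
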